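/- Let L/K be a finite Galois extension of degree n with Galois group G and let σ ∈ G have odd multiplicative order 2r+1 > 1. Then for every nonzero b ∈ L, the rank of the alternating K-bilinear form f_{b,σ} equals n − n/(2r+1). -/

import Mathlib

variable {K L : Type*} [Field K] [Field L] [Algebra K L]

/-- The alternating bilinear form `f_{b,σ}(x,y) = Tr^L_K (b * (x * σ y - σ x * y))`,
where `Tr^L_K` is the trace form of the extension `L/K`. -/
noncomputable def galoisAltForm (b : L) (σ : L ≃ₐ[K] L) : (L →ₗ[K] L →ₗ[K] K) :=
  LinearMap.mk₂ K (fun x y => Algebra.trace K L (b * (x * σ y - σ x * y)))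
    (fun x x' y => by
      try dsimp only
      rw [show b * ((x + x') * σ y - σ (x + x') * y)
            = b * (x * σ y - σ x * y) + b * (x' * σ y - σ x' * y) by
          rw [map_add σ]; ring, map_add])
    (fun a x y => by
      try dsimp only
      rw [show b * ((a • x) * σ y - σ (a • x) * y)
            = a • (b * (x * σ y - σ x * y)) by
          rw [map_smul σ]
          simp only [smul_sub, smul_mul_assoc, mul_smul_comm, mul_sub], map_smul])
    (fun x y y' => by
      try dsimp only
      rw [show b * (x * σ (y + y') - σ x * (y + y'))
            = b * (x * σ y - σ x * y) + b * (x * σ y' - σ x * y') by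
          rw [map_add σ]; ring, map_add])
    (fun a x y => by
      try dsimp only
      rw [show b * (x * σ (a • y) - σ x * (a • y))
            = a • (b * (x * σ y - σ x * y)) by
          rw [map_smul σ]
          simp only [smul_sub, smul_mul_assoc, mul_smul_comm, mul_sub], map_smul])

/-- The rank of a bilinear form on `L`: `dim_K L` minus the dimension of its radical
`{x : L | ∀ y, f x y = 0}` (which is the kernel of `f` viewed as a map `L →ₗ[K] (L →ₗ[K] K)`). -/
noncomputable def formRank (f : (L →ₗ[K] L →ₗ[K] K)) : ℕ :=
  Module.finrank K L - Module.finrank K (LinearMap.ker f)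


private theorem galois_ker_char {K L : Type*} [Field K] [Field L] [Algebra K L]
    [FiniteDimensional K L] [IsGalois K L] (b : L) (σ : L ≃ₐ[K] L) (x : L) :
    (∀ y, Algebra.trace K L (b * (x * σ y - σ x * y)) = 0) ↔ σ b * σ (σ x) = b * x := by
  have key : ∀ y, Algebra.trace K L (b * (x * σ y - σ x * y))
      = Algebra.trace K L ((σ.symm (b * x) - b * σ x) * y) := by
    intro y
    have h1 : Algebra.trace K L (σ (σ.symm (b * x) * y)) = Algebra.trace K L (σ.symm (b * x) * y) :=
      Algebra.trace_eq_of_algEquiv σ _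
    rw [map_mul, AlgEquiv.apply_symm_apply] at h1
    rw [sub_mul, mul_sub, map_sub, map_sub, ← h1]
    ring_nf
  constructor
  · intro h
    have hz : σ.symm (b * x) - b * σ x = 0 := by
      apply (traceForm_nondegenerate K L).1
      intro y
      rw [Algebra.traceForm_apply, ← key, h]
    have h2 : σ.symm (b * x) = b * σ x := sub_eq_zero.mp hz
    have h3 := congrArg σ h2
    rw [AlgEquiv.apply_symm_apply, map_mul] at h3
    exact h3.symm
  · intro h y
    rw [key]
    have h2 : σ.symm (b * x) - b * σ x = 0 := by
      rw [sub_eq_zero]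
      apply σ.injective
      rw [AlgEquiv.apply_symm_apply, map_mul, h]
    rw [h2, zero_mul, map_zero]

private theorem galois_fix_sq {K L : Type*} [Field K] [Field L] [Algebra K L]
    {σ : L ≃ₐ[K] L} {r : ℕ} (hσ : σ ^ (2 * r + 1) = 1) {z : L}
    (hz : σ (σ z) = z) : σ z = z := by
  have hpow : ∀ k : ℕ, (σ ^ (2 * k)) z = z := by
    intro k
    induction k with
    | zero => simp
    | succ k ih =>
      have h : σ ^ (2 * (k + 1)) = σ ^ (2 * k) * σ ^ 2 := by
        rw [← pow_add]; ring_nf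
      rw [h, AlgEquiv.mul_apply, pow_two, AlgEquiv.mul_apply, hz, ih]
  have h1 : σ ^ (2 * (r + 1)) = σ := by
    have h : σ ^ (2 * (r + 1)) = σ ^ (2 * r + 1) * σ := by rw [← pow_succ]; ring_nf
    rw [h, hσ, one_mul]
  calc σ z = (σ ^ (2 * (r + 1))) z := by rw [h1]
    _ = z := hpow (r + 1)

/-- if `σ` has odd order `2r+1 > 1`, then for every nonzero `b`
the form `f_{b,σ}` has rank `n − n/(2r+1)`. -/
theorem statement3 [FiniteDimensional K L] [IsGalois K L]
    (n : ℕ) (hn : Module.finrank K L = n)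
    (σ : L ≃ₐ[K] L) (r : ℕ) (hr : 1 ≤ r) (hord : orderOf σ = 2 * r + 1) :
    ∀ b : L, b ≠ 0 → formRank (galoisAltForm b σ) = n - n / (2 * r + 1) := by
  classical
  intro b hb
  have hσpow : σ ^ (2 * r + 1) = 1 := by rw [← hord]; exact pow_orderOf_eq_one σ
  have hσb : σ b ≠ 0 := by simpa using hb
  set P : L := ∏ i ∈ Finset.range (r + 1), (σ ^ (2 * i)) b with hPdef
  have hPne : P ≠ 0 := by
    rw [hPdef]
    exact Finset.prod_ne_zero_iff.mpr fun i _ => by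
      simp only [ne_eq, EmbeddingLike.map_eq_zero_iff]; exact hb
  have key : b * σ (σ P) = σ b * P := by
    have hmap : σ (σ P) = ∏ i ∈ Finset.range (r + 1), (σ ^ (2 * (i + 1))) b := by
      rw [hPdef, map_prod, map_prod]
      refine Finset.prod_congr rfl fun i _ => ?_
      have h : σ ^ (2 * (i + 1)) = σ ^ 2 * σ ^ (2 * i) := by rw [← pow_add]; ring_nf
      rw [h, AlgEquiv.mul_apply, pow_two, AlgEquiv.mul_apply]
    have h1 : b * σ (σ P) = ∏ i ∈ Finset.range (r + 2), (σ ^ (2 * i)) b := by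
      rw [Finset.prod_range_succ', hmap]
      simp [mul_comm]
    have h2 : σ b * P = ∏ i ∈ Finset.range (r + 2), (σ ^ (2 * i)) b := by
      rw [Finset.prod_range_succ, hPdef]
      have h : σ ^ (2 * (r + 1)) = σ := by
        have h3 : σ ^ (2 * (r + 1)) = σ ^ (2 * r + 1) * σ := by rw [← pow_succ]; ring_nf
        rw [h3, hσpow, one_mul]
      rw [h, mul_comm]
    rw [h1, h2]
  set F := IntermediateField.fixedField (Subgroup.zpowers σ) with hF
  set g : F →ₗ[K] L := (LinearMap.mulLeft K P⁻¹) ∘ₗ F.val.toLinearMap with hg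
  have hginj : Function.Injective g := by
    intro u v huv
    have h : (P⁻¹ * (u : L) = P⁻¹ * (v : L)) := huv
    exact Subtype.ext (mul_left_cancel₀ (inv_ne_zero hPne) h)
  have hkermem : ∀ x : L, x ∈ LinearMap.ker (galoisAltForm b σ) ↔ σ b * σ (σ x) = b * x := by
    intro x
    have h : (galoisAltForm b σ x = 0) ↔
        ∀ y, Algebra.trace K L (b * (x * σ y - σ x * y)) = 0 := by
      rw [LinearMap.ext_iff]; simp [galoisAltForm]
    rw [LinearMap.mem_ker, h, galois_ker_char]
  have hrange : LinearMap.ker (galoisAltForm b σ) = LinearMap.range g := by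
    ext x
    rw [hkermem x]
    constructor
    · intro hx
      set z := P * x with hzdef
      have hσσz : σ (σ z) = z := by
        have h1 : σ b * (b * σ (σ z)) = σ b * (b * z) := by
          rw [hzdef, map_mul, map_mul]
          calc σ b * (b * (σ (σ P) * σ (σ x)))
              = (b * σ (σ P)) * (σ b * σ (σ x)) := by ring
            _ = (σ b * P) * (b * x) := by rw [key, hx]
            _ = σ b * (b * (P * x)) := by ring
        exact mul_left_cancel₀ hb (mul_left_cancel₀ hσb h1)
      have hσz : σ z = z := galois_fix_sq hσpow hσσz
      have hnat : ∀ m : ℕ, (σ ^ m) z = z := by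
        intro m
        induction m with
        | zero => simp
        | succ m ih => rw [pow_succ, AlgEquiv.mul_apply, hσz, ih]
      have hzF : z ∈ F := by
        intro gg
        rcases gg with ⟨gg, k, hk⟩
        subst hk
        show (σ ^ k) z = z
        induction k using Int.rec with
        | ofNat m =>
          show ((σ ^ (m : ℤ))) z = z
          rw [zpow_natCast]; exact hnat m
        | negSucc m =>
          rw [zpow_negSucc]
          refine (σ ^ (m + 1)).injective ?_
          rw [← AlgEquiv.mul_apply, mul_inv_cancel, AlgEquiv.one_apply, hnat (m + 1)]
      refine ⟨⟨z, hzF⟩, ?_⟩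
      show P⁻¹ * z = x
      rw [hzdef, inv_mul_cancel_left₀ hPne]
    · rintro ⟨⟨z, hz⟩, rfl⟩
      have hσz : σ z = z := hz ⟨σ, Subgroup.mem_zpowers σ⟩
      show σ b * σ (σ (P⁻¹ * z)) = b * (P⁻¹ * z)
      have hσσP : σ (σ P) ≠ 0 := by simpa using hPne
      simp only [map_mul, map_inv₀, hσz]
      field_simp
      linear_combination (-z) * key
  have hFL : Module.finrank F L = 2 * r + 1 := by
    rw [hF, IntermediateField.finrank_fixedField_eq_card,
      Nat.card_zpowers, hord]
  have hmul : Module.finrank K F * Module.finrank F L = n := by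
    rw [Module.finrank_mul_finrank K F L, hn]
  rw [hFL] at hmul
  have hFrank : Module.finrank K F = n / (2 * r + 1) :=
    (Nat.div_eq_of_eq_mul_left (by omega) hmul.symm).symm
  show Module.finrank K L - Module.finrank K (LinearMap.ker (galoisAltForm b σ))
      = n - n / (2 * r + 1)
  rw [hn, hrange, LinearMap.finrank_range_of_inj hginj, hFrank]
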